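/- Let K be a p-adic field with ring of integers O_K and maximal ideal 𝔭, and let P ∈ O_K[x] be a polynomial that is squarefree as an element of K[x] and not divisible by a uniformizer. Then for every n ≥ 1 the congruence P(x) ≡ 0 (mod 𝔭ⁿ) has at most max(|Disc P|_𝔭^{-1}·deg P, |Disc P|_𝔭^{-3}) roots in O_K/𝔭ⁿ. -/

import Mathlib

open Polynomial

/-- The Sylvester matrix of two polynomials `f`, `g`. -/
def sylvesterMatrix {R : Type*} [CommRing R] (f g : Polynomial R) :
    Matrix (Fin (g.natDegree + f.natDegree)) (Fin (g.natDegree + f.natDegree)) R :=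
  Matrix.of fun i j =>
    if (i : ℕ) < g.natDegree then
      (if (i : ℕ) ≤ (j : ℕ) ∧ (j : ℕ) ≤ (i : ℕ) + f.natDegree
        then f.coeff (f.natDegree + i - j) else 0)
    else
      (if (i : ℕ) - g.natDegree ≤ (j : ℕ) ∧ (j : ℕ) ≤ ((i : ℕ) - g.natDegree) + g.natDegree
        then g.coeff (g.natDegree + ((i : ℕ) - g.natDegree) - j) else 0)

/-- The resultant of two polynomials, as the determinant of their Sylvester matrix. -/
def polyResultant {R : Type*} [CommRing R] (f g : Polynomial R) : R :=
  (sylvesterMatrix f g).det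

/-- The discriminant of a polynomial over a field:
`disc f = (-1)^{m(m-1)/2} · Res(f, f') / lc(f)` where `m = deg f`. -/
noncomputable def polyDisc {K : Type*} [Field K] (f : Polynomial K) : K :=
  ((-1) ^ (f.natDegree * (f.natDegree - 1) / 2) * polyResultant f f.derivative)
    / f.leadingCoeff

open Matrix

section Aux

variable {O : Type*} [CommRing O]

lemma aux_aeval_mk (I : Ideal O) (P : Polynomial O) (y : O) :
    Polynomial.aeval (Ideal.Quotient.mk I y) P = Ideal.Quotient.mk I (P.eval y) := by
  rw [← Ideal.Quotient.algebraMap_eq, Polynomial.aeval_algebraMap_apply_eq_algebraMap_eval]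

lemma aux_det_mem_of_column {N : ℕ} (A : Matrix (Fin N) (Fin N) O) (j₀ : Fin N)
    (I : Ideal O) (h : ∀ i, A i j₀ ∈ I) : A.det ∈ I := by
  rw [Matrix.det_apply]
  refine Ideal.sum_mem _ fun σ _ => ?_
  rw [← Finset.mul_prod_erase _ _ (Finset.mem_univ j₀), Units.smul_def, zsmul_eq_mul]
  exact Ideal.mul_mem_left _ _ (Ideal.mul_mem_right _ _ (h _))

lemma aux_window_sum (h : Polynomial O) (x : O) (Nn t : ℕ)
    (hw : t + h.natDegree + 1 ≤ Nn) :
    (∑ j ∈ Finset.range Nn,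
      (if t ≤ j ∧ j ≤ t + h.natDegree then h.coeff (h.natDegree + t - j) else 0)
        * x ^ (Nn - 1 - j))
      = x ^ (Nn - 1 - t - h.natDegree) * h.eval x := by
  rw [Polynomial.eval_eq_sum_range, Finset.mul_sum]
  simp only [ite_mul, zero_mul]
  rw [← Finset.sum_filter]
  refine Finset.sum_nbij' (fun j => h.natDegree + t - j) (fun k => h.natDegree + t - k)
    ?_ ?_ ?_ ?_ ?_
  · intro a ha
    simp only [Finset.mem_filter, Finset.mem_range] at ha ⊢
    omega
  · intro a ha
    simp only [Finset.mem_filter, Finset.mem_range] at ha ⊢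
    omega
  · intro a ha
    simp only [Finset.mem_filter, Finset.mem_range] at ha
    show h.natDegree + t - (h.natDegree + t - a) = a
    omega
  · intro a ha
    simp only [Finset.mem_range] at ha
    show h.natDegree + t - (h.natDegree + t - a) = a
    omega
  · intro a ha
    simp only [Finset.mem_filter, Finset.mem_range] at ha
    show h.coeff (h.natDegree + t - a) * x ^ (Nn - 1 - a)
      = x ^ (Nn - 1 - t - h.natDegree) * (h.coeff (h.natDegree + t - a) * x ^ (h.natDegree + t - a))
    rw [show Nn - 1 - a = (Nn - 1 - t - h.natDegree) + (h.natDegree + t - a) from by omega,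
      pow_add]
    ring

end Aux

section Key

variable {O : Type*} [CommRing O]

lemma aux_key_mem (P : Polynomial O) (hd2 : 2 ≤ P.natDegree)
    (hdd : P.derivative.natDegree = P.natDegree - 1) (x : O) :
    polyResultant P P.derivative ∈
      Ideal.span {P.leadingCoeff * P.eval x, P.leadingCoeff * P.derivative.eval x} := by
  classical
  set N := P.derivative.natDegree + P.natDegree with hN
  have hNval : 3 ≤ N := by omega
  set M := sylvesterMatrix P P.derivative with hM
  set u : Fin N → O := fun j => x ^ (N - 1 - (j : ℕ)) with hu
  have h0N : 0 < N := by omega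
  set j₀ : Fin N := ⟨0, h0N⟩ with hj₀
  set jl : Fin N := ⟨N - 1, by omega⟩ with hjl
  have hj₀v : (j₀ : ℕ) = 0 := rfl
  have hjlv : (jl : ℕ) = N - 1 := rfl
  have hj₀jl : j₀ ≠ jl := by
    simp only [hj₀, hjl, Ne, Fin.mk.injEq]
    omega
  have hcol0 : ∀ i : Fin N, ∃ c : O, M i j₀ = c * P.leadingCoeff := by
    intro i
    simp only [hM, sylvesterMatrix, Matrix.of_apply]
    by_cases h1 : (i : ℕ) < P.derivative.natDegree
    · rw [if_pos h1]
      by_cases h0 : (i : ℕ) = 0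
      · refine ⟨1, ?_⟩
        rw [if_pos ⟨by omega, by omega⟩]
        rw [show P.natDegree + (i : ℕ) - (j₀ : ℕ) = P.natDegree from by omega]
        rw [Polynomial.coeff_natDegree, one_mul]
      · refine ⟨0, ?_⟩
        rw [if_neg (by omega), zero_mul]
    · rw [if_neg h1]
      by_cases h2 : (i : ℕ) - P.derivative.natDegree = 0
      · refine ⟨(P.derivative.natDegree : O) + 1, ?_⟩
        rw [if_pos ⟨by omega, by omega⟩]
        rw [show P.derivative.natDegree + ((i : ℕ) - P.derivative.natDegree) - (j₀ : ℕ)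
          = P.derivative.natDegree from by omega]
        rw [Polynomial.coeff_derivative]
        rw [show P.derivative.natDegree + 1 = P.natDegree from by omega]
        rw [Polynomial.coeff_natDegree]
        push_cast
        ring
      · refine ⟨0, ?_⟩
        rw [if_neg (by omega), zero_mul]
  have hadj : ∀ i : Fin N, ∃ c : O, M.adjugate jl i = c * P.leadingCoeff := by
    intro i
    rw [Matrix.adjugate_apply]
    have hmem : (M.updateRow i (Pi.single jl 1)).det ∈ Ideal.span {P.leadingCoeff} := by
      refine aux_det_mem_of_column _ j₀ _ fun r => ?_
      rw [Matrix.updateRow_apply]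
      by_cases hri : r = i
      · rw [if_pos hri, Pi.single_eq_of_ne hj₀jl]
        exact Ideal.zero_mem _
      · rw [if_neg hri]
        obtain ⟨c, hc⟩ := hcol0 r
        rw [hc]
        exact Ideal.mem_span_singleton.mpr ⟨c, mul_comm _ _⟩
    obtain ⟨c, hc⟩ := Ideal.mem_span_singleton'.mp hmem
    exact ⟨c, hc.symm⟩
  have hwin : ∀ i : Fin N, ∃ a b : O,
      (M *ᵥ u) i = a * P.eval x + b * P.derivative.eval x := by
    intro i
    have hsum : (M *ᵥ u) i = ∑ j : Fin N, M i j * u j := by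
      simp [Matrix.mulVec, dotProduct]
      rfl
    by_cases h1 : (i : ℕ) < P.derivative.natDegree
    · refine ⟨x ^ (N - 1 - (i : ℕ) - P.natDegree), 0, ?_⟩
      rw [hsum]
      have hent : ∀ j : Fin N, M i j * u j =
          (if (i : ℕ) ≤ (j : ℕ) ∧ (j : ℕ) ≤ (i : ℕ) + P.natDegree
            then P.coeff (P.natDegree + (i : ℕ) - (j : ℕ)) else 0) * x ^ (N - 1 - (j : ℕ)) := by
        intro j
        simp only [hM, sylvesterMatrix, Matrix.of_apply, hu]
        rw [if_pos h1]
      rw [Finset.sum_congr rfl fun j _ => hent j]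
      rw [Fin.sum_univ_eq_sum_range
        (fun j => (if (i : ℕ) ≤ j ∧ j ≤ (i : ℕ) + P.natDegree
          then P.coeff (P.natDegree + (i : ℕ) - j) else 0) * x ^ (N - 1 - j)) N]
      rw [aux_window_sum P x N (i : ℕ) (by omega)]
      ring
    · refine ⟨0, x ^ (N - 1 - ((i : ℕ) - P.derivative.natDegree) - P.derivative.natDegree), ?_⟩
      rw [hsum]
      have hent : ∀ j : Fin N, M i j * u j =
          (if (i : ℕ) - P.derivative.natDegree ≤ (j : ℕ) ∧
              (j : ℕ) ≤ ((i : ℕ) - P.derivative.natDegree) + P.derivative.natDegree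
            then P.derivative.coeff
              (P.derivative.natDegree + ((i : ℕ) - P.derivative.natDegree) - (j : ℕ)) else 0)
            * x ^ (N - 1 - (j : ℕ)) := by
        intro j
        simp only [hM, sylvesterMatrix, Matrix.of_apply, hu]
        rw [if_neg h1]
      rw [Finset.sum_congr rfl fun j _ => hent j]
      rw [Fin.sum_univ_eq_sum_range
        (fun j => (if (i : ℕ) - P.derivative.natDegree ≤ j ∧
            j ≤ ((i : ℕ) - P.derivative.natDegree) + P.derivative.natDegree
          then P.derivative.coeff
            (P.derivative.natDegree + ((i : ℕ) - P.derivative.natDegree) - j) else 0)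
          * x ^ (N - 1 - j)) N]
      have hiN : (i : ℕ) < N := i.isLt
      rw [aux_window_sum P.derivative x N ((i : ℕ) - P.derivative.natDegree) (by omega)]
      ring
  have hdet : M.det = ∑ i : Fin N, M.adjugate jl i * (M *ᵥ u) i := by
    have hAM : (M.adjugate * M) *ᵥ u = (M.det • (1 : Matrix (Fin N) (Fin N) O)) *ᵥ u := by
      rw [Matrix.adjugate_mul]
    rw [← Matrix.mulVec_mulVec] at hAM
    have h2 := congrFun hAM jl
    rw [Matrix.smul_mulVec, Matrix.one_mulVec] at h2
    have hujl : u jl = 1 := by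
      simp only [hu, hjlv]
      rw [Nat.sub_self, pow_zero]
    rw [Pi.smul_apply, hujl, smul_eq_mul, mul_one] at h2
    rw [← h2]
    simp [Matrix.mulVec, dotProduct]
    rfl
  rw [polyResultant, ← hM, hdet]
  refine Ideal.sum_mem _ fun i _ => ?_
  obtain ⟨c, hc⟩ := hadj i
  obtain ⟨a, b, hab⟩ := hwin i
  rw [hc, hab]
  exact Ideal.mem_span_pair.mpr ⟨c * a, c * b, by ring⟩

end Key


section MapRes

variable {R S : Type*} [CommRing R] [CommRing S]

lemma aux_polyResultant_map (f g : Polynomial R) (φ : R →+* S)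
    (hf : (f.map φ).natDegree = f.natDegree) (hg : (g.map φ).natDegree = g.natDegree) :
    polyResultant (f.map φ) (g.map φ) = φ (polyResultant f g) := by
  unfold polyResultant
  have e : (g.map φ).natDegree + (f.map φ).natDegree = g.natDegree + f.natDegree := by
    rw [hf, hg]
  have hmat : sylvesterMatrix (f.map φ) (g.map φ)
      = ((sylvesterMatrix f g).map φ).submatrix (Fin.cast e) (Fin.cast e) := by
    ext i j
    simp only [sylvesterMatrix, Matrix.submatrix_apply, Matrix.map_apply, Matrix.of_apply,
      Fin.coe_cast, hf, hg, Polynomial.coeff_map, apply_ite φ, map_zero]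
  rw [hmat]
  rw [show ((Fin.cast e : Fin _ → Fin _)) = ⇑(finCongr e) from rfl]
  rw [Matrix.det_submatrix_equiv_self (finCongr e)]
  exact (RingHom.map_det φ (sylvesterMatrix f g)).symm

end MapRes

section DVR

variable {O : Type*} [CommRing O] [IsDomain O] [IsDiscreteValuationRing O]

lemma aux_le_of_pow_dvd {π u : O} (hπ : Irreducible π) (hu : IsUnit u) {a b : ℕ}
    (h : π ^ a ∣ π ^ b * u) : a ≤ b := by
  by_contra hab
  push_neg at hab
  have h1 : π ^ b * π ∣ π ^ b * u := by
    rw [← pow_succ]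
    exact dvd_trans (pow_dvd_pow π (by omega)) h
  have h2 : π ∣ u := (mul_dvd_mul_iff_left (pow_ne_zero b hπ.ne_zero)).mp h1
  exact hπ.not_isUnit (isUnit_of_dvd_unit h2 hu)

lemma aux_mem_pow_iff {π : O} (hπ : Irreducible π) (x : O) (k : ℕ) :
    x ∈ (IsLocalRing.maximalIdeal O) ^ k ↔ π ^ k ∣ x := by
  rw [hπ.maximalIdeal_eq, Ideal.span_singleton_pow, Ideal.mem_span_singleton]

/-- Lemma A : P(y) and P'(y) cannot both lie in 𝔭^(v+1). -/
lemma aux_lemA (P : Polynomial O) (hd2 : 2 ≤ P.natDegree)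
    (hdd : P.derivative.natDegree = P.natDegree - 1)
    {π w : O} (hπ : Irreducible π) (hw : IsUnit w) {v : ℕ}
    (hres : polyResultant P P.derivative = π ^ v * w * P.leadingCoeff)
    (y : O) (hy : P.eval y ∈ (IsLocalRing.maximalIdeal O) ^ (v + 1)) :
    P.derivative.eval y ∉ (IsLocalRing.maximalIdeal O) ^ (v + 1) := by
  intro hy'
  have hlc : P.leadingCoeff ≠ 0 := by
    intro h0
    rw [Polynomial.leadingCoeff_eq_zero] at h0
    simp [h0] at hd2
  obtain ⟨a, b, hab⟩ := Ideal.mem_span_pair.mp (aux_key_mem P hd2 hdd y)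
  rw [hres] at hab
  have hcancel : a * P.eval y + b * P.derivative.eval y = π ^ v * w := by
    have := mul_left_cancel₀ hlc (show P.leadingCoeff * (a * P.eval y + b * P.derivative.eval y)
      = P.leadingCoeff * (π ^ v * w) from by linear_combination hab)
    exact this
  have hmem : π ^ v * w ∈ (IsLocalRing.maximalIdeal O) ^ (v + 1) := by
    rw [← hcancel]
    exact Ideal.add_mem _ (Ideal.mul_mem_left _ _ hy) (Ideal.mul_mem_left _ _ hy')
  rw [aux_mem_pow_iff hπ] at hmem
  have := aux_le_of_pow_dvd hπ hw hmem
  omega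

/-- Separation: two roots mod 𝔭^n congruent mod 𝔭^(v+1) are congruent mod 𝔭^(n-v). -/
lemma aux_sep (P : Polynomial O) {π : O} (hπ : Irreducible π) {v n : ℕ} (hn : v + 1 ≤ n)
    (HA : ∀ y : O, P.eval y ∈ (IsLocalRing.maximalIdeal O) ^ (v + 1) →
      P.derivative.eval y ∉ (IsLocalRing.maximalIdeal O) ^ (v + 1))
    {y y' : O} (hy : P.eval y ∈ (IsLocalRing.maximalIdeal O) ^ n)
    (hy' : P.eval y' ∈ (IsLocalRing.maximalIdeal O) ^ n)
    (hcong : y' - y ∈ (IsLocalRing.maximalIdeal O) ^ (v + 1)) :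
    y' - y ∈ (IsLocalRing.maximalIdeal O) ^ (n - v) := by
  by_contra hno
  set h := y' - y with hh
  have hh0 : h ≠ 0 := by
    intro h0
    exact hno (h0 ▸ Ideal.zero_mem _)
  obtain ⟨s, uu, hsu⟩ := IsDiscreteValuationRing.eq_unit_mul_pow_irreducible hh0 hπ
  rw [mul_comm (uu : O) (π ^ s)] at hsu
  have hs1 : v + 1 ≤ s := by
    refine aux_le_of_pow_dvd hπ uu.isUnit ?_
    rw [← hsu, ← aux_mem_pow_iff hπ]
    exact hcong
  have hs2 : s ≤ n - v - 1 := by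
    by_contra hs
    push_neg at hs
    apply hno
    rw [aux_mem_pow_iff hπ, hsu]
    exact Dvd.dvd.mul_right (pow_dvd_pow π (by omega)) _
  obtain ⟨k, hk⟩ := P.binomExpansion y h
  have hyh : y + h = y' := by rw [hh]; ring
  have hz : P.eval y' - P.eval y = (P.derivative.eval y + k * h) * h := by
    rw [← hyh, hk]; ring
  have hPy : P.eval y ∈ (IsLocalRing.maximalIdeal O) ^ (v + 1) :=
    Ideal.pow_le_pow_right (by omega) hy
  have hz1 : P.derivative.eval y + k * h ∉ (IsLocalRing.maximalIdeal O) ^ (v + 1) := by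
    intro hmem
    refine HA y hPy ?_
    have hkh : k * h ∈ (IsLocalRing.maximalIdeal O) ^ (v + 1) :=
      Ideal.mul_mem_left _ _ hcong
    have := Ideal.sub_mem _ hmem hkh
    simpa using this
  have hz0 : P.derivative.eval y + k * h ≠ 0 := by
    intro h0
    exact hz1 (h0 ▸ Ideal.zero_mem _)
  obtain ⟨t, u₂, htu⟩ := IsDiscreteValuationRing.eq_unit_mul_pow_irreducible hz0 hπ
  rw [mul_comm (u₂ : O) (π ^ t)] at htu
  have ht : t ≤ v := by
    by_contra hts
    push_neg at hts
    apply hz1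
    rw [aux_mem_pow_iff hπ, htu]
    exact Dvd.dvd.mul_right (pow_dvd_pow π (by omega)) _
  have hfin : P.eval y' - P.eval y ∈ (IsLocalRing.maximalIdeal O) ^ n :=
    Ideal.sub_mem _ hy' hy
  rw [hz, htu, hsu, aux_mem_pow_iff hπ] at hfin
  have : π ^ n ∣ π ^ (t + s) * (↑u₂ * ↑uu) := by
    rw [pow_add]
    convert hfin using 1
    ring
  have := aux_le_of_pow_dvd hπ (u₂.isUnit.mul uu.isUnit) this
  omega

end DVR


/-- a section of the projection to the residue field -/
noncomputable def resSec (O : Type*) [CommRing O] [IsLocalRing O] :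
    (O ⧸ IsLocalRing.maximalIdeal O) → O :=
  Function.surjInv Ideal.Quotient.mk_surjective

lemma resSec_spec {O : Type*} [CommRing O] [IsLocalRing O] (z : O ⧸ IsLocalRing.maximalIdeal O) :
    Ideal.Quotient.mk (IsLocalRing.maximalIdeal O) (resSec O z) = z :=
  Function.surjInv_eq _ z

section Count

variable {O : Type*} [CommRing O] [IsDomain O] [IsDiscreteValuationRing O]

lemma aux_digits {π : O} (hπ : Irreducible π) :
    ∀ (b a : ℕ) (c : O), c ∈ (IsLocalRing.maximalIdeal O) ^ a →
      ∃ f : Fin b → (O ⧸ IsLocalRing.maximalIdeal O),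
        c - ∑ i : Fin b, resSec O (f i) * π ^ (a + (i : ℕ))
          ∈ (IsLocalRing.maximalIdeal O) ^ (a + b) := by
  intro b
  induction b with
  | zero =>
    intro a c hc
    refine ⟨fun i => i.elim0, ?_⟩
    simpa using hc
  | succ b ih =>
    intro a c hc
    rw [aux_mem_pow_iff hπ] at hc
    obtain ⟨e, hce⟩ := hc
    have h1 : c - resSec O (Ideal.Quotient.mk _ e) * π ^ a
        ∈ (IsLocalRing.maximalIdeal O) ^ (a + 1) := by
      have he : e - resSec O (Ideal.Quotient.mk (IsLocalRing.maximalIdeal O) e)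
          ∈ IsLocalRing.maximalIdeal O := by
        rw [← Ideal.Quotient.mk_eq_mk_iff_sub_mem, resSec_spec]
      have : c - resSec O (Ideal.Quotient.mk _ e) * π ^ a
          = π ^ a * (e - resSec O (Ideal.Quotient.mk _ e)) := by
        rw [hce]; ring
      rw [this, pow_succ]
      exact Ideal.mul_mem_mul (Ideal.pow_mem_pow
        (by rw [hπ.maximalIdeal_eq]; exact Ideal.mem_span_singleton_self π) a) he
    obtain ⟨f', hf'⟩ := ih (a + 1) _ h1
    refine ⟨Fin.cons (Ideal.Quotient.mk _ e) f', ?_⟩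
    have hsum : ∑ i : Fin (b + 1),
        resSec O ((Fin.cons (Ideal.Quotient.mk (IsLocalRing.maximalIdeal O) e) f' : Fin (b+1) →
          (O ⧸ IsLocalRing.maximalIdeal O)) i) * π ^ (a + (i : ℕ))
        = resSec O (Ideal.Quotient.mk _ e) * π ^ a
          + ∑ i : Fin b, resSec O (f' i) * π ^ (a + 1 + (i : ℕ)) := by
      rw [Fin.sum_univ_succ]
      simp only [Fin.cons_zero, Fin.cons_succ, Nat.add_zero]
      congr 1
      refine Finset.sum_congr rfl fun i _ => ?_
      have : a + ((i : ℕ) + 1) = a + 1 + (i : ℕ) := by omega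
      rw [Fin.val_succ, this]
    rw [hsum]
    rw [show a + (b + 1) = a + 1 + b from by omega]
    have : c - (resSec O (Ideal.Quotient.mk _ e) * π ^ a
        + ∑ i : Fin b, resSec O (f' i) * π ^ (a + 1 + (i : ℕ)))
        = (c - resSec O (Ideal.Quotient.mk _ e) * π ^ a)
          - ∑ i : Fin b, resSec O (f' i) * π ^ (a + 1 + (i : ℕ)) := by ring
    rw [this]
    exact hf'

variable [Finite (O ⧸ IsLocalRing.maximalIdeal O)]

lemma aux_fiber_bound {π : O} (hπ : Irreducible π) {q : ℕ}
    (hq : Nat.card (O ⧸ IsLocalRing.maximalIdeal O) = q)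
    (k a : ℕ) (hak : a ≤ k) (z : O) :
    {y : O ⧸ (IsLocalRing.maximalIdeal O) ^ k |
      Ideal.Quotient.factor (Ideal.pow_le_pow_right hak) y
        = Ideal.Quotient.mk ((IsLocalRing.maximalIdeal O) ^ a) z}.ncard ≤ q ^ (k - a) := by
  classical
  set F : (Fin (k - a) → (O ⧸ IsLocalRing.maximalIdeal O)) → O ⧸ (IsLocalRing.maximalIdeal O) ^ k :=
    fun f => Ideal.Quotient.mk _ (z + ∑ i : Fin (k - a), resSec O (f i) * π ^ (a + (i : ℕ)))
    with hF
  have hsub : {y : O ⧸ (IsLocalRing.maximalIdeal O) ^ k |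
      Ideal.Quotient.factor (Ideal.pow_le_pow_right hak) y
        = Ideal.Quotient.mk ((IsLocalRing.maximalIdeal O) ^ a) z} ⊆ Set.range F := by
    rintro y hy
    obtain ⟨u, rfl⟩ := Ideal.Quotient.mk_surjective y
    rw [Set.mem_setOf_eq, Ideal.Quotient.factor_mk, Ideal.Quotient.mk_eq_mk_iff_sub_mem] at hy
    obtain ⟨f, hf⟩ := aux_digits hπ (k - a) a (u - z) hy
    rw [show a + (k - a) = k from by omega] at hf
    refine ⟨f, ?_⟩
    rw [hF]
    rw [Ideal.Quotient.mk_eq_mk_iff_sub_mem]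
    have : z + ∑ i : Fin (k - a), resSec O (f i) * π ^ (a + (i : ℕ)) - u
        = -((u - z) - ∑ i : Fin (k - a), resSec O (f i) * π ^ (a + (i : ℕ))) := by ring
    rw [this]
    exact neg_mem hf
  calc _ ≤ (Set.range F).ncard := Set.ncard_le_ncard hsub (Set.finite_range F)
    _ = (F '' Set.univ).ncard := by rw [Set.image_univ]
    _ ≤ (Set.univ : Set (Fin (k - a) → (O ⧸ IsLocalRing.maximalIdeal O))).ncard :=
        Set.ncard_image_le Set.finite_univ
    _ = Nat.card (Fin (k - a) → (O ⧸ IsLocalRing.maximalIdeal O)) := Set.ncard_univ _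
    _ = q ^ (k - a) := by rw [Nat.card_fun, hq, Nat.card_eq_fintype_card, Fintype.card_fin]

lemma aux_quot_finite {π : O} (hπ : Irreducible π) (k : ℕ) :
    Finite (O ⧸ (IsLocalRing.maximalIdeal O) ^ k) := by
  refine Finite.of_surjective
    (fun f : Fin k → (O ⧸ IsLocalRing.maximalIdeal O) =>
      Ideal.Quotient.mk ((IsLocalRing.maximalIdeal O) ^ k)
        (∑ i : Fin k, resSec O (f i) * π ^ (i : ℕ))) ?_
  intro y
  obtain ⟨u, rfl⟩ := Ideal.Quotient.mk_surjective y
  obtain ⟨f, hf⟩ := aux_digits hπ k 0 u (by simp)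
  refine ⟨f, ?_⟩
  rw [Ideal.Quotient.mk_eq_mk_iff_sub_mem]
  rw [show (0 : ℕ) + k = k from by omega] at hf
  have : (∑ i : Fin k, resSec O (f i) * π ^ (i : ℕ)) - u
      = -(u - ∑ i : Fin k, resSec O (f i) * π ^ (0 + (i : ℕ))) := by
    simp only [Nat.zero_add]
    ring
  rw [this]
  exact neg_mem hf

lemma aux_card_bound {π : O} (hπ : Irreducible π) {q : ℕ}
    (hq : Nat.card (O ⧸ IsLocalRing.maximalIdeal O) = q) (k : ℕ) :
    Nat.card (O ⧸ (IsLocalRing.maximalIdeal O) ^ k) ≤ q ^ k := by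
  have h := Nat.card_le_card_of_surjective
    (fun f : Fin k → (O ⧸ IsLocalRing.maximalIdeal O) =>
      Ideal.Quotient.mk ((IsLocalRing.maximalIdeal O) ^ k)
        (∑ i : Fin k, resSec O (f i) * π ^ (i : ℕ))) ?_
  · calc Nat.card (O ⧸ (IsLocalRing.maximalIdeal O) ^ k)
        ≤ Nat.card (Fin k → (O ⧸ IsLocalRing.maximalIdeal O)) := h
      _ = q ^ k := by rw [Nat.card_fun, hq, Nat.card_eq_fintype_card, Fintype.card_fin]
  · intro y
    obtain ⟨u, rfl⟩ := Ideal.Quotient.mk_surjective y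
    obtain ⟨f, hf⟩ := aux_digits hπ k 0 u (by simp)
    refine ⟨f, ?_⟩
    rw [Ideal.Quotient.mk_eq_mk_iff_sub_mem]
    rw [show (0 : ℕ) + k = k from by omega] at hf
    have : (∑ i : Fin k, resSec O (f i) * π ^ (i : ℕ)) - u
        = -(u - ∑ i : Fin k, resSec O (f i) * π ^ (0 + (i : ℕ))) := by
      simp only [Nat.zero_add]
      ring
    rw [this]
    exact neg_mem hf

/-- roots of P in O/𝔭^1 are at most natDegree P -/
lemma aux_roots1 (P : Polynomial O) (hprim : ∃ i, P.coeff i ∉ IsLocalRing.maximalIdeal O) :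
    {x : O ⧸ (IsLocalRing.maximalIdeal O) ^ 1 | Polynomial.aeval x P = 0}.ncard
      ≤ P.natDegree := by
  classical
  set e := Ideal.quotEquivOfEq (pow_one (IsLocalRing.maximalIdeal O)) with he
  set Pk := P.map (Ideal.Quotient.mk (IsLocalRing.maximalIdeal O)) with hPk
  have hPk0 : Pk ≠ 0 := by
    obtain ⟨i, hi⟩ := hprim
    intro h0
    apply hi
    have : Pk.coeff i = 0 := by rw [h0]; simp
    rw [hPk, Polynomial.coeff_map] at this
    rwa [← Ideal.Quotient.eq_zero_iff_mem]
  have hsub : ⇑e '' {x : O ⧸ (IsLocalRing.maximalIdeal O) ^ 1 | Polynomial.aeval x P = 0}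
      ⊆ ↑Pk.roots.toFinset := by
    rintro z ⟨x, hx, rfl⟩
    obtain ⟨y, rfl⟩ := Ideal.Quotient.mk_surjective x
    rw [Set.mem_setOf_eq, aux_aeval_mk, Ideal.Quotient.eq_zero_iff_mem, pow_one] at hx
    rw [he, Ideal.quotEquivOfEq_mk]
    simp only [Finset.coe_sort_coe, Multiset.mem_toFinset, Finset.mem_coe]
    rw [Polynomial.mem_roots']
    refine ⟨hPk0, ?_⟩
    rw [Polynomial.IsRoot, hPk, Polynomial.eval_map, Polynomial.eval₂_at_apply]
    rwa [Ideal.Quotient.eq_zero_iff_mem]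
  calc {x : O ⧸ (IsLocalRing.maximalIdeal O) ^ 1 | Polynomial.aeval x P = 0}.ncard
      = (⇑e '' {x : O ⧸ (IsLocalRing.maximalIdeal O) ^ 1 | Polynomial.aeval x P = 0}).ncard :=
        (Set.ncard_image_of_injective _ e.injective).symm
    _ ≤ (↑Pk.roots.toFinset : Set (O ⧸ IsLocalRing.maximalIdeal O)).ncard :=
        Set.ncard_le_ncard hsub (Pk.roots.toFinset : Finset _).finite_toSet
    _ = Pk.roots.toFinset.card := Set.ncard_coe_finset _
    _ ≤ Multiset.card Pk.roots := Multiset.toFinset_card_le _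
    _ ≤ Pk.natDegree := Polynomial.card_roots' Pk
    _ ≤ P.natDegree := Polynomial.natDegree_map_le

end Count


section Main

variable {O : Type*} [CommRing O] [IsDomain O] [IsDiscreteValuationRing O]
variable [Finite (O ⧸ IsLocalRing.maximalIdeal O)]

lemma aux_main_count (P : Polynomial O) {π : O} (hπ : Irreducible π) {q v n : ℕ}
    (hq : Nat.card (O ⧸ IsLocalRing.maximalIdeal O) = q) (hn2 : 2 * v + 2 ≤ n)
    (HA : ∀ y : O, P.eval y ∈ (IsLocalRing.maximalIdeal O) ^ (v + 1) →
      P.derivative.eval y ∉ (IsLocalRing.maximalIdeal O) ^ (v + 1)) :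
    {x : O ⧸ (IsLocalRing.maximalIdeal O) ^ n | Polynomial.aeval x P = 0}.ncard
      ≤ q ^ v * {x : O ⧸ (IsLocalRing.maximalIdeal O) ^ (v + 1) |
          Polynomial.aeval x P = 0}.ncard := by
  classical
  haveI h1 : Finite (O ⧸ (IsLocalRing.maximalIdeal O) ^ n) := aux_quot_finite hπ n
  haveI h2 : Finite (O ⧸ (IsLocalRing.maximalIdeal O) ^ (v + 1)) := aux_quot_finite hπ (v + 1)
  have hv1n : v + 1 ≤ n := by omega
  have hnvn : n - v ≤ n := by omega
  set T := {x : O ⧸ (IsLocalRing.maximalIdeal O) ^ n | Polynomial.aeval x P = 0} with hT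
  have hTfin : T.Finite := Set.toFinite T
  set S := {x : O ⧸ (IsLocalRing.maximalIdeal O) ^ (v + 1) | Polynomial.aeval x P = 0} with hS
  have hSfin : S.Finite := Set.toFinite S
  set g1 : O ⧸ (IsLocalRing.maximalIdeal O) ^ n → O ⧸ (IsLocalRing.maximalIdeal O) ^ (v + 1) :=
    ⇑(Ideal.Quotient.factor (S := (IsLocalRing.maximalIdeal O) ^ n)
      (T := (IsLocalRing.maximalIdeal O) ^ (v + 1)) (Ideal.pow_le_pow_right hv1n)) with hg1
  set g2 : O ⧸ (IsLocalRing.maximalIdeal O) ^ n → O ⧸ (IsLocalRing.maximalIdeal O) ^ (n - v) :=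
    ⇑(Ideal.Quotient.factor (S := (IsLocalRing.maximalIdeal O) ^ n)
      (T := (IsLocalRing.maximalIdeal O) ^ (n - v)) (Ideal.pow_le_pow_right hnvn)) with hg2
  have hroot : ∀ y : O, (Ideal.Quotient.mk ((IsLocalRing.maximalIdeal O) ^ n) y ∈ T)
      ↔ P.eval y ∈ (IsLocalRing.maximalIdeal O) ^ n := by
    intro y
    rw [hT, Set.mem_setOf_eq, aux_aeval_mk, Ideal.Quotient.eq_zero_iff_mem]
  have key : ∀ t ∈ hTfin.toFinset, ∀ t' ∈ hTfin.toFinset, g1 t = g1 t' → g2 t = g2 t' := by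
    intro t ht t' ht' hee
    obtain ⟨y, rfl⟩ := Ideal.Quotient.mk_surjective t
    obtain ⟨y', rfl⟩ := Ideal.Quotient.mk_surjective t'
    rw [Set.Finite.mem_toFinset, hroot] at ht ht'
    rw [hg1, Ideal.Quotient.factor_mk, Ideal.Quotient.factor_mk,
      Ideal.Quotient.mk_eq_mk_iff_sub_mem] at hee
    have hsep := aux_sep P hπ hv1n HA ht' ht hee
    rw [hg2, Ideal.Quotient.factor_mk, Ideal.Quotient.factor_mk,
      Ideal.Quotient.mk_eq_mk_iff_sub_mem]
    exact hsep
  have hcard := Finset.card_le_mul_card_image (f := g1) hTfin.toFinset (q ^ v) ?fibers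
  case fibers =>
    intro a ha
    rcases Finset.eq_empty_or_nonempty {x ∈ hTfin.toFinset | g1 x = a} with hemp | hne
    · rw [hemp, Finset.card_empty]
      exact Nat.zero_le _
    · obtain ⟨t₀, ht₀⟩ := hne
      have ht₀f := Finset.mem_filter.mp ht₀
      obtain ⟨z, hz⟩ := Ideal.Quotient.mk_surjective (g2 t₀)
      set Fib := {y : O ⧸ (IsLocalRing.maximalIdeal O) ^ n |
        Ideal.Quotient.factor (Ideal.pow_le_pow_right hnvn) y
          = Ideal.Quotient.mk ((IsLocalRing.maximalIdeal O) ^ (n - v)) z} with hFib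
      have hFibfin : Fib.Finite := Set.toFinite Fib
      have hfibcard : Fib.ncard ≤ q ^ (n - (n - v)) :=
        aux_fiber_bound hπ hq n (n - v) hnvn z
      rw [show n - (n - v) = v from by omega] at hfibcard
      have hss : {x ∈ hTfin.toFinset | g1 x = a} ⊆ hFibfin.toFinset := by
        intro t ht
        have htf := Finset.mem_filter.mp ht
        rw [Set.Finite.mem_toFinset, hFib, Set.mem_setOf_eq]
        have : g2 t = g2 t₀ := key t htf.1 t₀ ht₀f.1 (by rw [htf.2, ht₀f.2])
        rw [← hg2, this, ← hz]
      calc {x ∈ hTfin.toFinset | g1 x = a}.card ≤ hFibfin.toFinset.card :=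
            Finset.card_le_card hss
        _ = Fib.ncard := (Set.ncard_eq_toFinset_card _ hFibfin).symm
        _ ≤ q ^ v := hfibcard
  have himg : hTfin.toFinset.image g1 ⊆ hSfin.toFinset := by
    intro zz hzz
    rw [Finset.mem_image] at hzz
    obtain ⟨t, ht, rfl⟩ := hzz
    obtain ⟨y, rfl⟩ := Ideal.Quotient.mk_surjective t
    rw [Set.Finite.mem_toFinset, hroot] at ht
    rw [Set.Finite.mem_toFinset, hg1, Ideal.Quotient.factor_mk, hS, Set.mem_setOf_eq,
      aux_aeval_mk, Ideal.Quotient.eq_zero_iff_mem]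
    exact Ideal.pow_le_pow_right hv1n ht
  calc T.ncard = hTfin.toFinset.card := Set.ncard_eq_toFinset_card _ hTfin
    _ ≤ q ^ v * (hTfin.toFinset.image g1).card := hcard
    _ ≤ q ^ v * hSfin.toFinset.card := Nat.mul_le_mul_left _ (Finset.card_le_card himg)
    _ = q ^ v * S.ncard := by rw [Set.ncard_eq_toFinset_card _ hSfin]

end Main

/-- Let `K` be a p-adic field with ring of integers `O` (formalized as a
complete discrete valuation ring of characteristic zero with finite residue field of
cardinality `q`), and let `P ∈ O[x]` be squarefree as an element of `K[x]` and not divisible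
by a uniformizer. If the discriminant of `P` has valuation `v` (i.e.
`Disc P = π^v · w` with `π` a uniformizer and `w` a unit, so that
`|Disc P|_𝔭 = q^{-v}`), then for every `n ≥ 1` the congruence `P(x) ≡ 0 (mod 𝔭ⁿ)` has at
most `max(q^v · deg P, q^{3v})` roots in `O/𝔭ⁿ`. -/
theorem stmt4 (O : Type*) [CommRing O] [IsDomain O] [IsDiscreteValuationRing O]
    [CharZero O] [IsAdicComplete (IsLocalRing.maximalIdeal O) O]
    [Finite (O ⧸ IsLocalRing.maximalIdeal O)]
    (q : ℕ) (hq : Nat.card (O ⧸ IsLocalRing.maximalIdeal O) = q)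
    (P : Polynomial O)
    (hP : Squarefree (P.map (algebraMap O (FractionRing O))))
    (hprim : ∃ i, P.coeff i ∉ IsLocalRing.maximalIdeal O)
    (v : ℕ) (π w : O) (hπ : Irreducible π) (hw : IsUnit w)
    (hdisc : polyDisc (P.map (algebraMap O (FractionRing O)))
      = algebraMap O (FractionRing O) (π ^ v * w))
    (n : ℕ) (hn : 1 ≤ n) :
    {x : O ⧸ (IsLocalRing.maximalIdeal O) ^ n | Polynomial.aeval x P = 0}.Finite ∧
    {x : O ⧸ (IsLocalRing.maximalIdeal O) ^ n | Polynomial.aeval x P = 0}.ncard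
      ≤ max (q ^ v * P.natDegree) (q ^ (3 * v)) := by
  classical
  haveI hfinq : Finite (O ⧸ (IsLocalRing.maximalIdeal O) ^ n) := aux_quot_finite hπ n
  have hTfin : {x : O ⧸ (IsLocalRing.maximalIdeal O) ^ n | Polynomial.aeval x P = 0}.Finite :=
    Set.toFinite _
  refine ⟨hTfin, ?_⟩
  have hq1 : 1 ≤ q := by
    rw [← hq]
    exact Nat.card_pos
  have hP0 : P ≠ 0 := by
    obtain ⟨i, hi⟩ := hprim
    intro h0
    apply hi
    rw [h0, Polynomial.coeff_zero]
    exact Submodule.zero_mem _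
  -- case on degree
  rcases Nat.lt_or_ge P.natDegree 2 with hd | hd2
  · rcases Nat.lt_or_ge P.natDegree 1 with hd0' | hd1'
    · -- degree 0 : no roots
      have hd0 : P.natDegree = 0 := by omega
      have hC : P = C (P.coeff 0) := Polynomial.eq_C_of_natDegree_eq_zero hd0
      have hc0 : P.coeff 0 ∉ IsLocalRing.maximalIdeal O := by
        obtain ⟨i, hi⟩ := hprim
        have hi0 : i = 0 := by
          by_contra hii
          apply hi
          rw [Polynomial.coeff_eq_zero_of_natDegree_lt (by omega)]
          exact Submodule.zero_mem _
        rwa [hi0] at hi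
      have hTe : {x : O ⧸ (IsLocalRing.maximalIdeal O) ^ n | Polynomial.aeval x P = 0} = ∅ := by
        ext x
        simp only [Set.mem_setOf_eq, Set.mem_empty_iff_false, iff_false]
        obtain ⟨y, rfl⟩ := Ideal.Quotient.mk_surjective x
        rw [aux_aeval_mk, Ideal.Quotient.eq_zero_iff_mem]
        intro hmem
        apply hc0
        have hPy : P.eval y = P.coeff 0 := by
          conv_lhs => rw [hC]
          rw [Polynomial.eval_C]
        rw [hPy] at hmem
        exact Ideal.pow_le_self (by omega) hmem
      rw [hTe]
      simp only [Set.ncard_empty]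
      exact Nat.zero_le _
    · -- degree 1
      have hd1 : P.natDegree = 1 := by omega
      have hP11 : P = C (P.coeff 1) * X + C (P.coeff 0) :=
        Polynomial.eq_X_add_C_of_natDegree_le_one (by omega)
      have heval : ∀ y : O, P.eval y = P.coeff 1 * y + P.coeff 0 := by
        intro y
        conv_lhs => rw [hP11]
        simp
      have hbound1 : 1 ≤ max (q ^ v * P.natDegree) (q ^ (3 * v)) := by
        have : 1 ≤ q ^ (3 * v) := Nat.one_le_pow _ _ (by omega)
        omega
      by_cases hu : IsUnit (P.coeff 1)
      · -- at most one root
        have hsub : {x : O ⧸ (IsLocalRing.maximalIdeal O) ^ n |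
            Polynomial.aeval x P = 0}.Subsingleton := by
          intro x hx x' hx'
          obtain ⟨y, rfl⟩ := Ideal.Quotient.mk_surjective x
          obtain ⟨y', rfl⟩ := Ideal.Quotient.mk_surjective x'
          rw [Set.mem_setOf_eq, aux_aeval_mk, Ideal.Quotient.eq_zero_iff_mem] at hx hx'
          rw [Ideal.Quotient.mk_eq_mk_iff_sub_mem]
          obtain ⟨u1, hu1⟩ := hu
          have hyy : y - y' = (↑u1⁻¹ : O) * (P.eval y - P.eval y') := by
            rw [heval y, heval y']
            have : P.coeff 1 * y + P.coeff 0 - (P.coeff 1 * y' + P.coeff 0)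
                = P.coeff 1 * (y - y') := by ring
            rw [this, ← hu1, ← mul_assoc]
            rw [Units.inv_mul]
            ring
          rw [hyy]
          exact Ideal.mul_mem_left _ _ (Ideal.sub_mem _ hx hx')
        rcases {x : O ⧸ (IsLocalRing.maximalIdeal O) ^ n |
            Polynomial.aeval x P = 0}.eq_empty_or_nonempty with hemp | ⟨x0, hx0⟩
        · rw [hemp, Set.ncard_empty]
          exact Nat.zero_le _
        · have hss : {x : O ⧸ (IsLocalRing.maximalIdeal O) ^ n |
              Polynomial.aeval x P = 0} ⊆ {x0} := fun x hx => hsub hx hx0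
          calc {x : O ⧸ (IsLocalRing.maximalIdeal O) ^ n | Polynomial.aeval x P = 0}.ncard
              ≤ ({x0} : Set _).ncard := Set.ncard_le_ncard hss (Set.finite_singleton x0)
            _ = 1 := Set.ncard_singleton x0
            _ ≤ _ := hbound1
      · -- no roots
        have hc1m : P.coeff 1 ∈ IsLocalRing.maximalIdeal O := by
          rwa [IsLocalRing.mem_maximalIdeal, mem_nonunits_iff]
        have hc0 : P.coeff 0 ∉ IsLocalRing.maximalIdeal O := by
          obtain ⟨i, hi⟩ := hprim
          have hi0 : i = 0 := by
            by_contra hii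
            apply hi
            rcases Nat.lt_or_ge i 2 with hi2 | hi2
            · have : i = 1 := by omega
              rwa [this]
            · rw [Polynomial.coeff_eq_zero_of_natDegree_lt (by omega)]
              exact Submodule.zero_mem _
          rwa [hi0] at hi
        have hTe : {x : O ⧸ (IsLocalRing.maximalIdeal O) ^ n |
            Polynomial.aeval x P = 0} = ∅ := by
          ext x
          simp only [Set.mem_setOf_eq, Set.mem_empty_iff_false, iff_false]
          obtain ⟨y, rfl⟩ := Ideal.Quotient.mk_surjective x
          rw [aux_aeval_mk, Ideal.Quotient.eq_zero_iff_mem]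
          intro hmem
          apply hc0
          have h1 : P.eval y ∈ IsLocalRing.maximalIdeal O :=
            Ideal.pow_le_self (by omega) hmem
          rw [heval y] at h1
          have h2 : P.coeff 1 * y ∈ IsLocalRing.maximalIdeal O :=
            Ideal.mul_mem_right _ _ hc1m
          have := Ideal.sub_mem _ h1 h2
          simpa using this
        rw [hTe]
        simp only [Set.ncard_empty]
        exact Nat.zero_le _
  · -- degree ≥ 2
    have hlc0 : P.leadingCoeff ≠ 0 := by
      rw [Ne, Polynomial.leadingCoeff_eq_zero]
      exact hP0
    have hdd : P.derivative.natDegree = P.natDegree - 1 := by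
      refine le_antisymm (Polynomial.natDegree_derivative_le P) ?_
      refine Polynomial.le_natDegree_of_ne_zero ?_
      rw [Polynomial.coeff_derivative]
      rw [show P.natDegree - 1 + 1 = P.natDegree from by omega]
      rw [Polynomial.coeff_natDegree]
      refine mul_ne_zero hlc0 ?_
      have hc : ((P.natDegree - 1 + 1 : ℕ) : O) ≠ ((0 : ℕ) : O) :=
        Nat.cast_injective.ne (by omega)
      push_cast at hc
      exact hc
    -- compute the resultant over O from hdisc
    set φ := algebraMap O (FractionRing O) with hφ
    have hinj : Function.Injective φ := IsFractionRing.injective O (FractionRing O)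
    have hdegmap : (P.map φ).natDegree = P.natDegree := natDegree_map_eq_of_injective hinj P
    have hdermap : (P.map φ).derivative = P.derivative.map φ := Polynomial.derivative_map P φ
    have hdegder : (P.derivative.map φ).natDegree = P.derivative.natDegree :=
      natDegree_map_eq_of_injective hinj _
    have hresmap : polyResultant (P.map φ) ((P.map φ).derivative)
        = φ (polyResultant P P.derivative) := by
      rw [hdermap]
      exact aux_polyResultant_map P P.derivative φ hdegmap hdegder
    have hlcmap : (P.map φ).leadingCoeff = φ P.leadingCoeff := leadingCoeff_map_of_injective hinj P
    have hlcK : φ P.leadingCoeff ≠ 0 := by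
      intro h0
      exact hlc0 (hinj (by rw [h0, map_zero]))
    set E := P.natDegree * (P.natDegree - 1) / 2 with hE
    rw [polyDisc, hdegmap, hresmap, hlcmap, div_eq_iff hlcK] at hdisc
    have hresO : polyResultant P P.derivative = π ^ v * ((-1) ^ E * w) * P.leadingCoeff := by
      apply hinj
      have h1 : ((-1 : FractionRing O) ^ E) * ((-1 : FractionRing O) ^ E) = 1 := by
        rw [← pow_add, ← two_mul, pow_mul]
        norm_num
      calc φ (polyResultant P P.derivative)
          = ((-1 : FractionRing O) ^ E * ((-1 : FractionRing O) ^ E))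
            * φ (polyResultant P P.derivative) := by rw [h1, one_mul]
        _ = (-1 : FractionRing O) ^ E
            * ((-1 : FractionRing O) ^ E * φ (polyResultant P P.derivative)) := by ring
        _ = (-1 : FractionRing O) ^ E * (φ (π ^ v * w) * φ P.leadingCoeff) := by rw [hdisc]
        _ = φ (π ^ v * ((-1) ^ E * w) * P.leadingCoeff) := by
            simp only [_root_.map_mul, map_pow, _root_.map_neg, _root_.map_one]
            ring
    have hw' : IsUnit ((-1 : O) ^ E * w) := ((isUnit_one.neg).pow E).mul hw
    have HA : ∀ y : O, P.eval y ∈ (IsLocalRing.maximalIdeal O) ^ (v + 1) →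
        P.derivative.eval y ∉ (IsLocalRing.maximalIdeal O) ^ (v + 1) :=
      fun y hy => aux_lemA P hd2 hdd hπ hw' hresO y hy
    -- now count
    rcases Nat.lt_or_ge n (2 * v + 2) with hsm | hbig
    · rcases Nat.eq_zero_or_pos v with hv0 | hv1
      · -- v = 0, n = 1
        subst hv0
        have hn1 : n = 1 := by omega
        subst hn1
        have := aux_roots1 P hprim
        calc {x : O ⧸ (IsLocalRing.maximalIdeal O) ^ 1 | Polynomial.aeval x P = 0}.ncard
            ≤ P.natDegree := this
          _ ≤ q ^ 0 * P.natDegree := by rw [pow_zero, one_mul]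
          _ ≤ _ := le_max_left _ _
      · -- v ≥ 1 : crude bound by the whole space
        calc {x : O ⧸ (IsLocalRing.maximalIdeal O) ^ n | Polynomial.aeval x P = 0}.ncard
            ≤ (Set.univ : Set (O ⧸ (IsLocalRing.maximalIdeal O) ^ n)).ncard :=
              Set.ncard_le_ncard (Set.subset_univ _) Set.finite_univ
          _ = Nat.card (O ⧸ (IsLocalRing.maximalIdeal O) ^ n) := Set.ncard_univ _
          _ ≤ q ^ n := aux_card_bound hπ hq n
          _ ≤ q ^ (3 * v) := Nat.pow_le_pow_right hq1 (by omega)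
          _ ≤ _ := le_max_right _ _
    · -- main case
      have hmc := aux_main_count P hπ hq hbig HA
      rcases Nat.eq_zero_or_pos v with hv0 | hv1
      · subst hv0
        have hS1 : {x : O ⧸ (IsLocalRing.maximalIdeal O) ^ (0 + 1) |
            Polynomial.aeval x P = 0}.ncard ≤ P.natDegree := aux_roots1 P hprim
        calc {x : O ⧸ (IsLocalRing.maximalIdeal O) ^ n | Polynomial.aeval x P = 0}.ncard
            ≤ q ^ 0 * {x : O ⧸ (IsLocalRing.maximalIdeal O) ^ (0 + 1) |
                Polynomial.aeval x P = 0}.ncard := hmc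
          _ ≤ q ^ 0 * P.natDegree := Nat.mul_le_mul_left _ hS1
          _ ≤ _ := le_max_left _ _
      · haveI : Finite (O ⧸ (IsLocalRing.maximalIdeal O) ^ (v + 1)) :=
          aux_quot_finite hπ (v + 1)
        have hS : {x : O ⧸ (IsLocalRing.maximalIdeal O) ^ (v + 1) |
            Polynomial.aeval x P = 0}.ncard ≤ q ^ (v + 1) := by
          calc {x : O ⧸ (IsLocalRing.maximalIdeal O) ^ (v + 1) |
              Polynomial.aeval x P = 0}.ncard
              ≤ (Set.univ : Set (O ⧸ (IsLocalRing.maximalIdeal O) ^ (v + 1))).ncard :=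
                Set.ncard_le_ncard (Set.subset_univ _) Set.finite_univ
            _ = Nat.card (O ⧸ (IsLocalRing.maximalIdeal O) ^ (v + 1)) := Set.ncard_univ _
            _ ≤ q ^ (v + 1) := aux_card_bound hπ hq (v + 1)
        calc {x : O ⧸ (IsLocalRing.maximalIdeal O) ^ n | Polynomial.aeval x P = 0}.ncard
            ≤ q ^ v * {x : O ⧸ (IsLocalRing.maximalIdeal O) ^ (v + 1) |
                Polynomial.aeval x P = 0}.ncard := hmc
          _ ≤ q ^ v * q ^ (v + 1) := Nat.mul_le_mul_left _ hS
          _ = q ^ (2 * v + 1) := by rw [← pow_add]; ring_nf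
          _ ≤ q ^ (3 * v) := Nat.pow_le_pow_right hq1 (by omega)
          _ ≤ _ := le_max_right _ _
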